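/- Let Ω ⊆ ℍ² be an open geodesically convex set, let p ∈ Ω, and let q ∈ ∂Ω ∩ ℍ². Let G be a complete hyperbolic geodesic through q (i.e., a vertical Euclidean half-line or a Euclidean semicircle centered on the x-axis) such that Ω is contained in one of the two connected components H of ℍ² \ G, and let ν be the Euclidean unit normal to G at q pointing away from H. Then the one-sided directional derivative at q of the function x ↦ d(x,p) in the direction ν exists and is strictly positive. Consequently, if J : ℍ² → ℝ is radial about p with J(x) = f(d(x,p)) for a C¹ strictly decreasing function f with f' < 0 on (0,∞), then the directional derivative of J at q in the direction ν is strictly negative. -/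

import Mathlib

open MeasureTheory Filter Set Topology

noncomputable section

/-- The upper half-plane model of the hyperbolic plane. -/
def H2 : Set (ℝ × ℝ) := {p | 0 < p.2}

/-- Inverse hyperbolic cosine. -/
def arcosh (t : ℝ) : ℝ := Real.log (t + Real.sqrt (t ^ 2 - 1))

/-- Hyperbolic distance in the upper half-plane model. -/
def hypDist (a b : ℝ × ℝ) : ℝ :=
  arcosh (1 + ((a.1 - b.1) ^ 2 + (a.2 - b.2) ^ 2) / (2 * a.2 * b.2))

/-- Partial derivative in the `x` direction. -/
def pdx (u : ℝ × ℝ → ℝ) (p : ℝ × ℝ) : ℝ := fderiv ℝ u p (1, 0)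

/-- Partial derivative in the `y` direction. -/
def pdy (u : ℝ × ℝ → ℝ) (p : ℝ × ℝ) : ℝ := fderiv ℝ u p (0, 1)

/-- Squared Euclidean norm of the gradient. -/
def gradSq (u : ℝ × ℝ → ℝ) (p : ℝ × ℝ) : ℝ := pdx u p ^ 2 + pdy u p ^ 2

/-- The hyperbolic Laplacian `Δu = y²(u_xx + u_yy)`. -/
def hypLap (u : ℝ × ℝ → ℝ) (p : ℝ × ℝ) : ℝ :=
  p.2 ^ 2 * (pdx (pdx u) p + pdy (pdy u) p)

/-- Geodesic convexity in the hyperbolic metric. -/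
def GeodesicallyConvex (Ω : Set (ℝ × ℝ)) : Prop :=
  ∀ a ∈ Ω, ∀ b ∈ Ω, ∀ c ∈ H2, hypDist a c + hypDist c b = hypDist a b → c ∈ Ω

/-- `ν` is a Euclidean unit vector, the boundary of `Ω` has a tangent line at `q`
(the line through `q` orthogonal to `ν`), and `ν` points outward from `Ω`. -/
def IsOutwardNormalAt (Ω : Set (ℝ × ℝ)) (q ν : ℝ × ℝ) : Prop :=
  ν.1 ^ 2 + ν.2 ^ 2 = 1 ∧
  Tendsto (fun x : ℝ × ℝ =>
      |(x.1 - q.1) * ν.1 + (x.2 - q.2) * ν.2| /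
        Real.sqrt ((x.1 - q.1) ^ 2 + (x.2 - q.2) ^ 2))
    (𝓝[frontier Ω \ {q}] q) (𝓝 0) ∧
  ∀ᶠ t in 𝓝[>] (0 : ℝ), q + t • ν ∉ Ω

/-- `G` is a complete hyperbolic geodesic in the upper half-plane (a vertical Euclidean
half-line or a Euclidean semicircle centered on the `x`-axis), and `H` is one of the two
connected components of `ℍ² \ G`. -/
def IsGeodesicWithSide (G H : Set (ℝ × ℝ)) : Prop :=
  (∃ a : ℝ, G = {p : ℝ × ℝ | 0 < p.2 ∧ p.1 = a} ∧
    (H = {p : ℝ × ℝ | 0 < p.2 ∧ p.1 < a} ∨ H = {p : ℝ × ℝ | 0 < p.2 ∧ a < p.1})) ∨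
  (∃ c r : ℝ, 0 < r ∧ G = {p : ℝ × ℝ | 0 < p.2 ∧ (p.1 - c) ^ 2 + p.2 ^ 2 = r ^ 2} ∧
    (H = {p : ℝ × ℝ | 0 < p.2 ∧ (p.1 - c) ^ 2 + p.2 ^ 2 < r ^ 2} ∨
     H = {p : ℝ × ℝ | 0 < p.2 ∧ r ^ 2 < (p.1 - c) ^ 2 + p.2 ^ 2})) 

/-- `ν` is a Euclidean unit vector normal to the curve `G` at `q ∈ G` (i.e. the line
through `q` orthogonal to `ν` is tangent to `G` at `q`) pointing away from the region `H`. -/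
def IsUnitNormalAwayFrom (G H : Set (ℝ × ℝ)) (q ν : ℝ × ℝ) : Prop :=
  ν.1 ^ 2 + ν.2 ^ 2 = 1 ∧
  Tendsto (fun x : ℝ × ℝ =>
      |(x.1 - q.1) * ν.1 + (x.2 - q.2) * ν.2| /
        Real.sqrt ((x.1 - q.1) ^ 2 + (x.2 - q.2) ^ 2))
    (𝓝[G \ {q}] q) (𝓝 0) ∧
  ∀ᶠ t in 𝓝[>] (0 : ℝ), q + t • ν ∉ closure H

/-- **Lemma (normal derivative of the distance at a supporting geodesic).** Let
`Ω ⊆ ℍ²` be open and geodesically convex, `p ∈ Ω`, and `q ∈ ∂Ω ∩ ℍ²`. Let `G` be a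
complete hyperbolic geodesic through `q` such that `Ω` is contained in one of the two
components `H` of `ℍ² \ G`, and let `ν` be the Euclidean unit normal to `G` at `q`
pointing away from `H`. Then the one-sided directional derivative at `q` of
`x ↦ d(x,p)` in direction `ν` exists and is strictly positive; consequently, for any `J`
radial about `p`, `J(x) = f(d(x,p))` with `f` a `C¹` strictly decreasing function with
`f' < 0` on `(0,∞)`, the directional derivative of `J` at `q` in direction `ν` is
strictly negative. -/
lemma hasDerivAt_arcosh {t : ℝ} (ht : 1 < t) :
    HasDerivAt arcosh (1 / Real.sqrt (t ^ 2 - 1)) t := by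
  have h1 : (0:ℝ) < t ^ 2 - 1 := by nlinarith
  have hs : 0 < Real.sqrt (t ^ 2 - 1) := Real.sqrt_pos.2 h1
  have h2 : HasDerivAt (fun u : ℝ => u ^ 2 - 1) (2 * t) t := by
    simpa using (hasDerivAt_pow 2 t).sub_const 1
  have h3 : HasDerivAt (fun u : ℝ => Real.sqrt (u ^ 2 - 1))
      (1 / (2 * Real.sqrt (t ^ 2 - 1)) * (2 * t)) t :=
    (Real.hasDerivAt_sqrt (ne_of_gt h1)).comp t h2
  have h4 : HasDerivAt (fun u : ℝ => u + Real.sqrt (u ^ 2 - 1))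
      (1 + 1 / (2 * Real.sqrt (t ^ 2 - 1)) * (2 * t)) t := (hasDerivAt_id t).add h3
  have hpos : 0 < t + Real.sqrt (t ^ 2 - 1) := by positivity
  have h5 := (Real.hasDerivAt_log (ne_of_gt hpos)).comp t h4
  have heq : (t + Real.sqrt (t ^ 2 - 1))⁻¹ * (1 + 1 / (2 * Real.sqrt (t ^ 2 - 1)) * (2 * t))
      = 1 / Real.sqrt (t ^ 2 - 1) := by
    have hsq : Real.sqrt (t ^ 2 - 1) ^ 2 = t ^ 2 - 1 := Real.sq_sqrt h1.le
    field_simp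
    nlinarith [hs, hsq]
  rw [heq] at h5
  exact h5

lemma key_deriv (p q ν : ℝ × ℝ) (hp2 : 0 < p.2) (hq2 : 0 < q.2)
    (hT : 0 < 2 * (q.1 - p.1) * ν.1 * q.2 + ν.2 * (q.2 ^ 2 - p.2 ^ 2 - (q.1 - p.1) ^ 2)) :
    ∃ L : ℝ, 0 < L ∧ HasDerivAt (fun t : ℝ => hypDist (q + t • ν) p) L 0 ∧
      1 < 1 + ((q.1 - p.1) ^ 2 + (q.2 - p.2) ^ 2) / (2 * q.2 * p.2) := by
  have hA : 0 < (q.1 - p.1) ^ 2 + (q.2 - p.2) ^ 2 := by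
    rcases lt_or_eq_of_le (by positivity : (0:ℝ) ≤ (q.1 - p.1) ^ 2 + (q.2 - p.2) ^ 2) with h | h
    · exact h
    · exfalso
      have h1 : q.1 = p.1 := by nlinarith [sq_nonneg (q.1 - p.1), sq_nonneg (q.2 - p.2)]
      have h2 : q.2 = p.2 := by nlinarith [sq_nonneg (q.1 - p.1), sq_nonneg (q.2 - p.2)]
      rw [h1, h2] at hT
      ring_nf at hT
      linarith
  set F0 : ℝ := 1 + ((q.1 - p.1) ^ 2 + (q.2 - p.2) ^ 2) / (2 * q.2 * p.2) with hF0
  have hF1 : 1 < F0 := by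
    rw [hF0]
    have hden : (0:ℝ) < 2 * q.2 * p.2 := by nlinarith
    nlinarith [div_pos hA hden]
  -- numerator and denominator functions
  have hn : HasDerivAt (fun t : ℝ => (q.1 + t * ν.1 - p.1) ^ 2 + (q.2 + t * ν.2 - p.2) ^ 2)
      (2 * (q.1 + 0 * ν.1 - p.1) * ν.1 + 2 * (q.2 + 0 * ν.2 - p.2) * ν.2) 0 := by
    have h1 : HasDerivAt (fun t : ℝ => q.1 + t * ν.1 - p.1) ν.1 0 := by
      simpa using (((hasDerivAt_id (0:ℝ)).mul_const ν.1).const_add q.1).sub_const p.1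
    have h2 : HasDerivAt (fun t : ℝ => q.2 + t * ν.2 - p.2) ν.2 0 := by
      simpa using (((hasDerivAt_id (0:ℝ)).mul_const ν.2).const_add q.2).sub_const p.2
    have := ((h1.pow 2).add (h2.pow 2))
    exact this.congr_deriv (by ring)
  have hd : HasDerivAt (fun t : ℝ => 2 * (q.2 + t * ν.2) * p.2) (2 * ν.2 * p.2) 0 := by
    have h2 : HasDerivAt (fun t : ℝ => q.2 + t * ν.2) ν.2 0 := by
      simpa using ((hasDerivAt_id (0:ℝ)).mul_const ν.2).const_add q.2
    simpa [mul_comm, mul_assoc, mul_left_comm] using (h2.const_mul 2).mul_const p.2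
  have hd0 : 2 * (q.2 + 0 * ν.2) * p.2 ≠ 0 := ne_of_gt (by nlinarith)
  have hφ := ((hn.div hd hd0).const_add 1)
  set D : ℝ := ((2 * (q.1 + 0 * ν.1 - p.1) * ν.1 + 2 * (q.2 + 0 * ν.2 - p.2) * ν.2) *
      (2 * (q.2 + 0 * ν.2) * p.2) -
      ((q.1 + 0 * ν.1 - p.1) ^ 2 + (q.2 + 0 * ν.2 - p.2) ^ 2) * (2 * ν.2 * p.2)) /
      (2 * (q.2 + 0 * ν.2) * p.2) ^ 2 with hD
  have hDpos : 0 < D := by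
    rw [hD]
    have hnum : (2 * (q.1 + 0 * ν.1 - p.1) * ν.1 + 2 * (q.2 + 0 * ν.2 - p.2) * ν.2) *
        (2 * (q.2 + 0 * ν.2) * p.2) -
        ((q.1 + 0 * ν.1 - p.1) ^ 2 + (q.2 + 0 * ν.2 - p.2) ^ 2) * (2 * ν.2 * p.2)
        = 2 * p.2 * (2 * (q.1 - p.1) * ν.1 * q.2 + ν.2 * (q.2 ^ 2 - p.2 ^ 2 - (q.1 - p.1) ^ 2)) := by
      ring
    rw [hnum]
    positivity
  -- value of φ at 0
  have hφ0 : 1 + ((q.1 + 0 * ν.1 - p.1) ^ 2 + (q.2 + 0 * ν.2 - p.2) ^ 2) /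
      (2 * (q.2 + 0 * ν.2) * p.2) = F0 := by rw [hF0]; ring_nf
  have hF1' : 1 < 1 + ((q.1 + 0 * ν.1 - p.1) ^ 2 + (q.2 + 0 * ν.2 - p.2) ^ 2) /
      (2 * (q.2 + 0 * ν.2) * p.2) := by rw [hφ0]; exact hF1
  have harc := (hasDerivAt_arcosh hF1').comp (0:ℝ) hφ
  rw [hφ0] at harc
  refine ⟨1 / Real.sqrt (F0 ^ 2 - 1) * D, ?_, ?_, hF1⟩
  · have : (0:ℝ) < Real.sqrt (F0 ^ 2 - 1) := Real.sqrt_pos.2 (by nlinarith)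
    positivity
  · have hfun : (fun t : ℝ => hypDist (q + t • ν) p) = arcosh ∘ (fun t : ℝ =>
        1 + ((q.1 + t * ν.1 - p.1) ^ 2 + (q.2 + t * ν.2 - p.2) ^ 2) /
          (2 * (q.2 + t * ν.2) * p.2)) := by
      funext t
      simp only [hypDist, Function.comp_apply, Prod.fst_add, Prod.snd_add, Prod.smul_fst,
        Prod.smul_snd, smul_eq_mul]
    rw [hfun]
    exact harc

lemma vertical_tangent (a : ℝ) (q ν : ℝ × ℝ) (hq2 : 0 < q.2) (hq1 : q.1 = a)
    (htang : Tendsto (fun x : ℝ × ℝ =>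
        |(x.1 - q.1) * ν.1 + (x.2 - q.2) * ν.2| /
          Real.sqrt ((x.1 - q.1) ^ 2 + (x.2 - q.2) ^ 2))
      (𝓝[{p : ℝ × ℝ | 0 < p.2 ∧ p.1 = a} \ {q}] q) (𝓝 0)) :
    ν.2 = 0 := by
  set γ : ℝ → ℝ × ℝ := fun t => (a, q.2 + t) with hγ
  have hmem : ∀ t ∈ Ioi (0:ℝ), γ t ∈ {p : ℝ × ℝ | 0 < p.2 ∧ p.1 = a} \ {q} := by
    intro t ht
    refine ⟨⟨by simpa using by linarith [mem_Ioi.mp ht], rfl⟩, ?_⟩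
    simp only [mem_singleton_iff]
    intro h
    have := congrArg Prod.snd h
    simp only [hγ] at this
    have ht' := mem_Ioi.mp ht
    linarith [this]
  have hlim : Tendsto γ (𝓝[>] (0:ℝ)) (𝓝[{p : ℝ × ℝ | 0 < p.2 ∧ p.1 = a} \ {q}] q) := by
    rw [tendsto_nhdsWithin_iff]
    constructor
    · have : Tendsto γ (𝓝 (0:ℝ)) (𝓝 (a, q.2 + 0)) := by
        apply Continuous.tendsto
        exact continuous_const.prodMk (continuous_const.add continuous_id)
      have hq' : (a, q.2 + 0) = q := by
        rw [← hq1]; simp [Prod.ext_iff]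
      rw [hq'] at this
      exact this.mono_left nhdsWithin_le_nhds
    · exact eventually_nhdsWithin_of_forall hmem
  have hcomp := htang.comp hlim
  have hconst : ∀ t ∈ Ioi (0:ℝ),
      ((fun x : ℝ × ℝ => |(x.1 - q.1) * ν.1 + (x.2 - q.2) * ν.2| /
          Real.sqrt ((x.1 - q.1) ^ 2 + (x.2 - q.2) ^ 2)) ∘ γ) t = |ν.2| := by
    intro t ht
    have ht' := mem_Ioi.mp ht
    simp only [Function.comp_apply, hγ, hq1]
    have h1 : a - a = 0 := by ring
    have h2 : q.2 + t - q.2 = t := by ring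
    rw [h1, h2]
    rw [show (0:ℝ) * ν.1 + t * ν.2 = t * ν.2 by ring]
    rw [show (0:ℝ) ^ 2 + t ^ 2 = t ^ 2 by ring]
    rw [Real.sqrt_sq ht'.le, abs_mul, abs_of_pos ht']
    field_simp
  have : Tendsto (fun _ : ℝ => |ν.2|) (𝓝[>] (0:ℝ)) (𝓝 0) :=
    hcomp.congr' (eventually_nhdsWithin_of_forall hconst)
  have h0 : |ν.2| = 0 := tendsto_nhds_unique tendsto_const_nhds this
  exact abs_eq_zero.mp h0

lemma circle_tangent (c r : ℝ) (hr : 0 < r) (q ν : ℝ × ℝ) (hq2 : 0 < q.2)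
    (hqG : (q.1 - c) ^ 2 + q.2 ^ 2 = r ^ 2)
    (htang : Tendsto (fun x : ℝ × ℝ =>
        |(x.1 - q.1) * ν.1 + (x.2 - q.2) * ν.2| /
          Real.sqrt ((x.1 - q.1) ^ 2 + (x.2 - q.2) ^ 2))
      (𝓝[{p : ℝ × ℝ | 0 < p.2 ∧ (p.1 - c) ^ 2 + p.2 ^ 2 = r ^ 2} \ {q}] q) (𝓝 0)) :
    q.2 * ν.1 = (q.1 - c) * ν.2 := by
  set G : Set (ℝ × ℝ) := {p : ℝ × ℝ | 0 < p.2 ∧ (p.1 - c) ^ 2 + p.2 ^ 2 = r ^ 2}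
  set u : ℝ → ℝ := fun s => r ^ 2 - (q.1 + s - c) ^ 2 with hu
  set ψ : ℝ → ℝ := fun s => Real.sqrt (u s) with hψ
  have hu0 : u 0 = q.2 ^ 2 := by simp only [hu]; nlinarith
  have hψ0 : ψ 0 = q.2 := by
    show Real.sqrt (u 0) = q.2
    rw [hu0, Real.sqrt_sq hq2.le]
  -- derivative of ψ at 0
  have huder : HasDerivAt u (-(2 * (q.1 - c))) 0 := by
    have h1 : HasDerivAt (fun s : ℝ => q.1 + s - c) 1 0 := by
      simpa using ((hasDerivAt_id (0:ℝ)).const_add q.1).sub_const c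
    have := (h1.pow 2).const_sub (r ^ 2)
    simpa using this
  have hu0ne : u 0 ≠ 0 := by rw [hu0]; positivity
  have hψder : HasDerivAt ψ (1 / (2 * Real.sqrt (u 0)) * (-(2 * (q.1 - c)))) 0 :=
    (Real.hasDerivAt_sqrt hu0ne).comp (0:ℝ) huder
  set k : ℝ := 1 / (2 * Real.sqrt (u 0)) * (-(2 * (q.1 - c))) with hk
  have hkval : k = -(q.1 - c) / q.2 := by
    rw [hk, hu0, Real.sqrt_sq hq2.le]; field_simp
  -- curve γ into G \ {q}
  set γ : ℝ → ℝ × ℝ := fun s => (q.1 + s, ψ s) with hγ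
  have hupos : ∀ᶠ s in 𝓝[>] (0:ℝ), 0 < u s := by
    have h : ∀ᶠ s in 𝓝 (0:ℝ), (fun _ : ℝ => (0:ℝ)) s < u s :=
      ContinuousAt.eventually_lt continuousAt_const huder.continuousAt
        (by simpa [hu0] using pow_pos hq2 2)
    exact (h.filter_mono nhdsWithin_le_nhds : _)
  have hmem : ∀ᶠ s in 𝓝[>] (0:ℝ), γ s ∈ G \ {q} := by
    filter_upwards [hupos, self_mem_nhdsWithin] with s hus hs
    have hs' : (0:ℝ) < s := hs
    refine ⟨⟨Real.sqrt_pos.2 hus, ?_⟩, ?_⟩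
    · show (q.1 + s - c) ^ 2 + Real.sqrt (u s) ^ 2 = r ^ 2
      rw [Real.sq_sqrt hus.le, hu]; ring
    · simp only [mem_singleton_iff]
      intro h
      have := congrArg Prod.fst h
      simp only [hγ] at this
      linarith
  have hγlim : Tendsto γ (𝓝[>] (0:ℝ)) (𝓝[G \ {q}] q) := by
    rw [tendsto_nhdsWithin_iff]
    refine ⟨?_, hmem⟩
    have h1 : Tendsto γ (𝓝 (0:ℝ)) (𝓝 (q.1 + 0, ψ 0)) :=
      ((continuous_const.add continuous_id).tendsto 0).prodMk_nhds
        (hψder.continuousAt.tendsto)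
    have : (q.1 + 0, ψ 0) = q := by rw [hψ0]; simp [Prod.ext_iff]
    rw [this] at h1
    exact h1.mono_left nhdsWithin_le_nhds
  have hcomp := htang.comp hγlim
  -- slope of ψ
  have hslope : Tendsto (fun s : ℝ => (ψ s - q.2) / s) (𝓝[>] (0:ℝ)) (𝓝 k) := by
    have h1 := hasDerivAt_iff_tendsto_slope.mp hψder
    have h2 := h1.mono_left (nhdsWithin_mono _ (fun s hs => by
      simp only [mem_compl_iff, mem_singleton_iff]
      exact ne_of_gt hs))
    refine h2.congr (fun s => ?_)
    simp [slope_def_field, hψ0]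
  -- the composed function eventually equals nice expression
  have hexpr : ∀ᶠ s in 𝓝[>] (0:ℝ),
      ((fun x : ℝ × ℝ => |(x.1 - q.1) * ν.1 + (x.2 - q.2) * ν.2| /
          Real.sqrt ((x.1 - q.1) ^ 2 + (x.2 - q.2) ^ 2)) ∘ γ) s =
      |ν.1 + ((ψ s - q.2) / s) * ν.2| / Real.sqrt (1 + ((ψ s - q.2) / s) ^ 2) := by
    filter_upwards [self_mem_nhdsWithin] with s hs
    have hs' : (0:ℝ) < s := hs
    simp only [Function.comp_apply, hγ]
    have e1 : q.1 + s - q.1 = s := by ring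
    rw [e1]
    set w : ℝ := (ψ s - q.2) / s with hw
    have hwps : ψ s - q.2 = s * w := by rw [hw]; field_simp
    rw [hwps]
    have e2 : s * ν.1 + s * w * ν.2 = s * (ν.1 + w * ν.2) := by ring
    have e3 : s ^ 2 + (s * w) ^ 2 = s ^ 2 * (1 + w ^ 2) := by ring
    rw [e2, e3, abs_mul, abs_of_pos hs', Real.sqrt_mul (sq_nonneg s),
      Real.sqrt_sq hs'.le]
    rw [mul_div_mul_left _ _ (ne_of_gt hs')]
  -- limit of the nice expression
  have hcont : Tendsto (fun s : ℝ => |ν.1 + ((ψ s - q.2) / s) * ν.2| /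
      Real.sqrt (1 + ((ψ s - q.2) / s) ^ 2)) (𝓝[>] (0:ℝ))
      (𝓝 (|ν.1 + k * ν.2| / Real.sqrt (1 + k ^ 2))) := by
    have h1 : Tendsto (fun v : ℝ => |ν.1 + v * ν.2| / Real.sqrt (1 + v ^ 2)) (𝓝 k)
        (𝓝 (|ν.1 + k * ν.2| / Real.sqrt (1 + k ^ 2))) := by
      apply ContinuousAt.tendsto
      apply ContinuousAt.div
      · exact ((continuousAt_const.add ((continuousAt_id).mul continuousAt_const)).abs)
      · exact (Real.continuous_sqrt.continuousAt.comp
          (continuousAt_const.add ((continuousAt_id).pow 2)))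
      · exact ne_of_gt (Real.sqrt_pos.2 (by positivity))
    exact h1.comp hslope
  have hzero : |ν.1 + k * ν.2| / Real.sqrt (1 + k ^ 2) = 0 :=
    tendsto_nhds_unique (hcont.congr' (hexpr.mono fun s h => h.symm)) hcomp
  have hden : Real.sqrt (1 + k ^ 2) ≠ 0 := ne_of_gt (Real.sqrt_pos.2 (by positivity))
  have hnum : ν.1 + k * ν.2 = 0 := by
    have := (div_eq_zero_iff.mp hzero).resolve_right hden
    exact abs_eq_zero.mp this
  rw [hkval] at hnum
  have hq2ne : q.2 ≠ 0 := ne_of_gt hq2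
  field_simp at hnum
  linarith [hnum]

theorem dist_outward_normal_derivative_pos
    (Ω : Set (ℝ × ℝ)) (hΩH : Ω ⊆ H2) (hopen : IsOpen Ω) (hconv : GeodesicallyConvex Ω)
    (p : ℝ × ℝ) (hp : p ∈ Ω) (q : ℝ × ℝ) (hq : q ∈ frontier Ω ∩ H2)
    (G H : Set (ℝ × ℝ)) (hGH : IsGeodesicWithSide G H) (hqG : q ∈ G) (hΩside : Ω ⊆ H)
    (ν : ℝ × ℝ) (hν : IsUnitNormalAwayFrom G H q ν) :
    (∃ L : ℝ, 0 < L ∧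
      Tendsto (fun t : ℝ => (hypDist (q + t • ν) p - hypDist q p) / t) (𝓝[>] 0) (𝓝 L)) ∧
    ∀ (J : ℝ × ℝ → ℝ) (f f' : ℝ → ℝ),
      (∀ x ∈ H2, J x = f (hypDist x p)) →
      (∀ r : ℝ, 0 < r → HasDerivAt f (f' r) r) →
      ContinuousOn f' (Set.Ioi 0) →
      (∀ r : ℝ, 0 < r → f' r < 0) →
      StrictAntiOn f (Set.Ici 0) →
      ∃ M : ℝ, M < 0 ∧
        Tendsto (fun t : ℝ => (J (q + t • ν) - J q) / t) (𝓝[>] 0) (𝓝 M) := by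
  obtain ⟨hνunit, hνtang, hνaway⟩ := hν
  have hp2 : 0 < p.2 := hΩH hp
  have hq2 : 0 < q.2 := hq.2
  -- Establish positivity of the directional derivative numerator
  have hT : 0 < 2 * (q.1 - p.1) * ν.1 * q.2 +
      ν.2 * (q.2 ^ 2 - p.2 ^ 2 - (q.1 - p.1) ^ 2) := by
    rcases hGH with ⟨a, hG, hH⟩ | ⟨c, r, hr, hG, hH⟩
    · -- vertical geodesic
      subst hG
      have hq1 : q.1 = a := hqG.2
      have hν2 : ν.2 = 0 := vertical_tangent a q ν hq2 hq1 hνtang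
      have hν1sq : ν.1 ^ 2 = 1 := by nlinarith [hνunit]
      have hcases : ν.1 = 1 ∨ ν.1 = -1 := by
        have h : (ν.1 - 1) * (ν.1 + 1) = 0 := by nlinarith
        rcases mul_eq_zero.mp h with h | h
        · left; linarith
        · right; linarith
      rcases hH with hH | hH
      · -- H = {x < a}, so ν = (1,0)
        have hp1 : p.1 < a := by
          have := hΩside hp; rw [hH] at this; exact this.2
        have hν1 : ν.1 = 1 := by
          rcases hcases with h | h
          · exact h
          · exfalso
            obtain ⟨t, ht1, ht2⟩ := (hνaway.and eventually_mem_nhdsWithin).exists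
            apply ht1
            apply subset_closure
            rw [hH]
            refine ⟨?_, ?_⟩
            · show 0 < q.2 + t * ν.2; rw [hν2]; linarith
            · show q.1 + t * ν.1 < a
              rw [h, hq1]
              have : (0:ℝ) < t := ht2
              linarith
        rw [hν1, hν2, hq1]
        nlinarith
      · -- H = {x > a}, so ν = (-1,0)
        have hp1 : a < p.1 := by
          have := hΩside hp; rw [hH] at this; exact this.2
        have hν1 : ν.1 = -1 := by
          rcases hcases with h | h
          · exfalso
            obtain ⟨t, ht1, ht2⟩ := (hνaway.and eventually_mem_nhdsWithin).exists
            apply ht1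
            apply subset_closure
            rw [hH]
            refine ⟨?_, ?_⟩
            · show 0 < q.2 + t * ν.2; rw [hν2]; linarith
            · show a < q.1 + t * ν.1
              rw [h, hq1]
              have : (0:ℝ) < t := ht2
              linarith
          · exact h
        rw [hν1, hν2, hq1]
        nlinarith
    · -- semicircular geodesic
      subst hG
      have hqc : (q.1 - c) ^ 2 + q.2 ^ 2 = r ^ 2 := hqG.2
      have htan : q.2 * ν.1 = (q.1 - c) * ν.2 := circle_tangent c r hr q ν hq2 hqc hνtang
      have hν2sq : ν.2 ^ 2 * r ^ 2 = q.2 ^ 2 := by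
        linear_combination (-ν.2 ^ 2) * hqc + q.2 ^ 2 * hνunit +
          (-(q.2 * ν.1 + (q.1 - c) * ν.2)) * htan
      have hq2ne : q.2 ≠ 0 := ne_of_gt hq2
      have hrne : r ≠ 0 := ne_of_gt hr
      have hcases : ν.2 * r = q.2 ∨ ν.2 * r = -q.2 := by
        have h : (ν.2 * r - q.2) * (ν.2 * r + q.2) = 0 := by nlinarith
        rcases mul_eq_zero.mp h with h | h
        · left; linarith
        · right; linarith
      have hIoo : ∀ᶠ t in 𝓝[>] (0:ℝ), t ∈ Ioo (0:ℝ) r := by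
        apply eventually_iff.mpr
        exact Ioo_mem_nhdsGT_of_mem ⟨le_refl (0:ℝ), hr⟩
      rcases hH with hH | hH
      · -- H is the inside of the disk; correct sign is ν = +radial
        have hpin : (p.1 - c) ^ 2 + p.2 ^ 2 < r ^ 2 := by
          have := hΩside hp; rw [hH] at this; exact this.2
        have hsign : ν.2 * r = q.2 := by
          rcases hcases with h | h
          · exact h
          · exfalso
            have hν1r : ν.1 * r = -(q.1 - c) :=
              mul_left_cancel₀ hq2ne (by linear_combination r * htan + (q.1 - c) * h)
            have hν1v : ν.1 = -(q.1 - c) / r := by field_simp; linarith [hν1r]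
            have hν2v : ν.2 = -q.2 / r := by field_simp; linarith [h]
            obtain ⟨t, ht1, ht2⟩ := (hνaway.and hIoo).exists
            apply ht1
            apply subset_closure
            rw [hH]
            refine ⟨?_, ?_⟩
            · show 0 < q.2 + t * ν.2
              rw [hν2v]
              have he : q.2 + t * (-q.2 / r) = q.2 * (r - t) / r := by
                field_simp; ring
              rw [he]
              exact div_pos (mul_pos hq2 (by linarith [ht2.2])) hr
            · show (q.1 + t * ν.1 - c) ^ 2 + (q.2 + t * ν.2) ^ 2 < r ^ 2
              rw [hν1v, hν2v]
              have he : (q.1 + t * (-(q.1 - c) / r) - c) ^ 2 + (q.2 + t * (-q.2 / r)) ^ 2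
                  = (r - t) ^ 2 := by
                field_simp
                linear_combination (r - t) ^ 2 * hqc
              rw [he]
              nlinarith [ht2.1, ht2.2, hr]
        have hν1r : ν.1 * r = q.1 - c :=
          mul_left_cancel₀ hq2ne (by linear_combination r * htan + (q.1 - c) * hsign)
        have hTr : (2 * (q.1 - p.1) * ν.1 * q.2 +
            ν.2 * (q.2 ^ 2 - p.2 ^ 2 - (q.1 - p.1) ^ 2)) * r
            = q.2 * (r ^ 2 - ((p.1 - c) ^ 2 + p.2 ^ 2)) := by
          linear_combination (2 * (q.1 - p.1) * q.2) * hν1r +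
            (q.2 ^ 2 - p.2 ^ 2 - (q.1 - p.1) ^ 2) * hsign + q.2 * hqc
        have h1 : 0 < (2 * (q.1 - p.1) * ν.1 * q.2 +
            ν.2 * (q.2 ^ 2 - p.2 ^ 2 - (q.1 - p.1) ^ 2)) * r := by
          rw [hTr]
          exact mul_pos hq2 (by linarith)
        rcases mul_pos_iff.mp h1 with ⟨h, _⟩ | ⟨_, h⟩
        · exact h
        · linarith
      · -- H is the outside of the disk; correct sign is ν = -radial
        have hpout : r ^ 2 < (p.1 - c) ^ 2 + p.2 ^ 2 := by
          have := hΩside hp; rw [hH] at this; exact this.2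
        have hsign : ν.2 * r = -q.2 := by
          rcases hcases with h | h
          · exfalso
            have hν1r : ν.1 * r = q.1 - c :=
              mul_left_cancel₀ hq2ne (by linear_combination r * htan + (q.1 - c) * h)
            have hν1v : ν.1 = (q.1 - c) / r := by field_simp; linarith [hν1r]
            have hν2v : ν.2 = q.2 / r := by field_simp; linarith [h]
            obtain ⟨t, ht1, ht2⟩ := (hνaway.and eventually_mem_nhdsWithin).exists
            have ht0 : (0:ℝ) < t := ht2
            apply ht1
            apply subset_closure
            rw [hH]
            refine ⟨?_, ?_⟩
            · show 0 < q.2 + t * ν.2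
              rw [hν2v]
              have : 0 < t * (q.2 / r) := mul_pos ht0 (div_pos hq2 hr)
              linarith
            · show r ^ 2 < (q.1 + t * ν.1 - c) ^ 2 + (q.2 + t * ν.2) ^ 2
              rw [hν1v, hν2v]
              have he : (q.1 + t * ((q.1 - c) / r) - c) ^ 2 + (q.2 + t * (q.2 / r)) ^ 2
                  = (r + t) ^ 2 := by
                field_simp
                linear_combination (r + t) ^ 2 * hqc
              rw [he]
              nlinarith [ht0, hr]
          · exact h
        have hν1r : ν.1 * r = -(q.1 - c) :=
          mul_left_cancel₀ hq2ne (by linear_combination r * htan + (q.1 - c) * hsign)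
        have hTr : (2 * (q.1 - p.1) * ν.1 * q.2 +
            ν.2 * (q.2 ^ 2 - p.2 ^ 2 - (q.1 - p.1) ^ 2)) * r
            = q.2 * (((p.1 - c) ^ 2 + p.2 ^ 2) - r ^ 2) := by
          linear_combination (2 * (q.1 - p.1) * q.2) * hν1r +
            (q.2 ^ 2 - p.2 ^ 2 - (q.1 - p.1) ^ 2) * hsign + (-q.2) * hqc
        have h1 : 0 < (2 * (q.1 - p.1) * ν.1 * q.2 +
            ν.2 * (q.2 ^ 2 - p.2 ^ 2 - (q.1 - p.1) ^ 2)) * r := by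
          rw [hTr]
          exact mul_pos hq2 (by linarith)
        rcases mul_pos_iff.mp h1 with ⟨h, _⟩ | ⟨_, h⟩
        · exact h
        · linarith
  obtain ⟨L, hL, hder, hF1⟩ := key_deriv p q ν hp2 hq2 hT
  have hg0 : hypDist (q + (0:ℝ) • ν) p = hypDist q p := by norm_num
  have hslope := hasDerivAt_iff_tendsto_slope.mp hder
  have hslope' := hslope.mono_left (nhdsWithin_mono _
    (fun t (ht : t ∈ Ioi (0:ℝ)) => (ne_of_gt ht : t ≠ 0)))
  constructor
  · refine ⟨L, hL, hslope'.congr (fun t => ?_)⟩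
    rw [slope_def_field, hg0, sub_zero]
  · intro J f f' hJf hfderiv _hf'cont hf'neg _hanti
    -- distance from q to p is positive
    have hd0 : 0 < hypDist q p := by
      show 0 < arcosh _
      rw [show arcosh (1 + ((q.1 - p.1) ^ 2 + (q.2 - p.2) ^ 2) / (2 * q.2 * p.2)) =
        Real.log ((1 + ((q.1 - p.1) ^ 2 + (q.2 - p.2) ^ 2) / (2 * q.2 * p.2)) +
          Real.sqrt ((1 + ((q.1 - p.1) ^ 2 + (q.2 - p.2) ^ 2) / (2 * q.2 * p.2)) ^ 2 - 1))
        from rfl]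
      apply Real.log_pos
      have := Real.sqrt_nonneg ((1 + ((q.1 - p.1) ^ 2 + (q.2 - p.2) ^ 2) /
        (2 * q.2 * p.2)) ^ 2 - 1)
      linarith
    have hf0 : HasDerivAt f (f' (hypDist q p))
        ((fun t : ℝ => hypDist (q + t • ν) p) 0) := by
      rw [show (fun t : ℝ => hypDist (q + t • ν) p) 0 = hypDist q p from by norm_num]
      exact hfderiv _ hd0
    have hcomp := hf0.comp (0:ℝ) hder
    refine ⟨f' (hypDist q p) * L, mul_neg_of_neg_of_pos (hf'neg _ hd0) hL, ?_⟩
    have hs2 := hasDerivAt_iff_tendsto_slope.mp hcomp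
    have hs2' := hs2.mono_left (nhdsWithin_mono _
      (fun t (ht : t ∈ Ioi (0:ℝ)) => (ne_of_gt ht : t ≠ 0)))
    refine hs2'.congr' ?_
    have hmemIoo : Ioo (0:ℝ) q.2 ∈ 𝓝[>] (0:ℝ) :=
      Ioo_mem_nhdsGT_of_mem ⟨le_refl 0, hq2⟩
    filter_upwards [hmemIoo] with t ht
    have ht0 : 0 < t := ht.1
    have htq : t < q.2 := ht.2
    have hH2t : (q + t • ν) ∈ H2 := by
      show 0 < q.2 + t * ν.2
      have h1 : (0:ℝ) ≤ ν.2 + 1 := by nlinarith [hνunit, sq_nonneg ν.1]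
      nlinarith [mul_nonneg ht0.le h1]
    rw [slope_def_field, sub_zero]
    simp only [Function.comp_apply]
    rw [hJf _ hH2t, hJf q hq.2]
    norm_num
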